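/- Let P, Q be integers with Lucas sequence U of the first kind. Then for all natural numbers n ≥ m, U(n)² − U(n−m)·U(n+m) = Q^{n−m}·U(m)² (Catalan's identity for general Lucas sequences). -/
import Mathlib


def lucasU (P Q : ℤ) : ℕ → ℤ
  | 0 => 0
  | 1 => 1
  | n + 2 => P * lucasU P Q (n + 1) - Q * lucasU P Q n

def lucasV (P Q : ℤ) : ℕ → ℤ
  | 0 => 2
  | 1 => P
  | n + 2 => P * lucasV P Q (n + 1) - Q * lucasV P Q n

lemma lucasU_add (P Q : ℤ) (k : ℕ) : ∀ m : ℕ,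
    lucasU P Q (k + m + 1) =
      lucasU P Q (k + 1) * lucasU P Q (m + 1) - Q * lucasU P Q k * lucasU P Q m := by
  intro m
  induction m using Nat.twoStepInduction with
  | zero => simp [lucasU]
  | one =>
    show lucasU P Q (k + 2) = _
    simp [lucasU]; ring
  | more m ih1 ih2 =>
    show lucasU P Q (k + m + 1 + 2) = _
    rw [lucasU]
    have h1 : k + m + 1 + 1 = k + (m + 1) + 1 := by ring
    rw [h1, ih2, ih1]
    simp only [lucasU]
    ring

lemma lucasU_norm (P Q : ℤ) : ∀ k : ℕ,
    lucasU P Q (k + 1) ^ 2 - P * lucasU P Q (k + 1) * lucasU P Q k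
      + Q * lucasU P Q k ^ 2 = Q ^ k := by
  intro k
  induction k with
  | zero => simp [lucasU]
  | succ k ih =>
    show lucasU P Q (k + 2) ^ 2 - _ + _ = _
    rw [lucasU]
    linear_combination Q * ih

theorem stmt19 (P Q : ℤ) (m n : ℕ) (h : m ≤ n) :
    lucasU P Q n ^ 2 - lucasU P Q (n - m) * lucasU P Q (n + m) =
      Q ^ (n - m) * lucasU P Q m ^ 2 := by
  obtain ⟨k, rfl⟩ : ∃ k, n = k + m := ⟨n - m, (Nat.sub_add_cancel h).symm⟩
  rw [Nat.add_sub_cancel]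
  cases m with
  | zero => simp only [lucasU, Nat.add_zero]; ring
  | succ j =>
    have e1 : k + (j + 1) = k + j + 1 := by ring
    have e2 : k + j + 1 + (j + 1) = k + (2 * j + 1) + 1 := by ring
    have e3 : (2 * j + 1) + 1 = j + (j + 1) + 1 := by ring
    have e4 : 2 * j + 1 = j + j + 1 := by ring
    rw [e1, lucasU_add P Q k j, e2, lucasU_add P Q k (2 * j + 1), e3,
      lucasU_add P Q j (j + 1), e4, lucasU_add P Q j j]
    have hw : lucasU P Q (j + 1 + 1) = P * lucasU P Q (j + 1) - Q * lucasU P Q j := by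
      show lucasU P Q (j + 2) = _
      rw [lucasU]
    rw [hw]
    have hn := lucasU_norm P Q k
    linear_combination (lucasU P Q (j + 1)) ^ 2 * hn
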